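/- Assume q is odd. For y = (y_0, ..., y_6) ∈ F^7, let R(y) be the 7×7 matrix over F with rows (0, y_2, −2y_0, −2y_4, 0, y_3, 0), (−y_2, 0, 2y_1, 2y_5, −y_3, 0, 0), (2y_0, −2y_1, 0, 0, 2y_4, −2y_5, 0), (2y_4, −2y_5, 0, 0, 0, 0, 0), (0, y_3, −2y_4, 0, 0, 0, 0), (−y_3, 0, 2y_5, 0, 0, 0, 0), (0,0,0,0,0,0,0). Then: R(y) has rank 0 if and only if y_0 = y_1 = y_2 = y_3 = y_4 = y_5 = 0; R(y) has rank 2 if and only if y_3 = y_4 = y_5 = 0 and at least one of y_0, y_1, y_2 is nonzero; in all other cases R(y) has rank 4. -/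

import Mathlib

open Matrix

/-- Lower bound on rank via a nonzero minor. -/
theorem stmt14_rank_ge {n k : ℕ} {F : Type*} [Field F] (A : Matrix (Fin n) (Fin n) F)
    (f g : Fin k → Fin n) (h : (A.submatrix f g).det ≠ 0) : k ≤ A.rank := by
  have hu : IsUnit (A.submatrix f g) := (Matrix.isUnit_iff_isUnit_det _).mpr h.isUnit
  have hr : (A.submatrix f g).rank = k := by
    rw [Matrix.rank_of_isUnit _ hu, Fintype.card_fin]
  have heq : A.submatrix f g =
      ((1 : Matrix (Fin n) (Fin n) F).submatrix f ⇑(Equiv.refl (Fin n))) * A *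
        ((1 : Matrix (Fin n) (Fin n) F).submatrix ⇑(Equiv.refl (Fin n)) g) := by
    rw [Matrix.one_submatrix_mul, Matrix.mul_submatrix_one]
    simp [Matrix.submatrix_submatrix]
  calc k = (A.submatrix f g).rank := hr.symm
    _ ≤ _ := by
        rw [heq]
        exact le_trans (Matrix.rank_mul_le_left _ _) (Matrix.rank_mul_le_right _ _)

/-- Upper bound on rank via an explicit kernel matrix. -/
theorem stmt14_rank_le {n k : ℕ} {F : Type*} [Field F] (A : Matrix (Fin n) (Fin n) F)
    (B : Matrix (Fin n) (Fin k) F) (f : Fin k → Fin n)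
    (hdet : (B.submatrix f id).det ≠ 0) (hAB : A * B = 0) : A.rank + k ≤ n := by
  have hu : IsUnit (B.submatrix f id) := (Matrix.isUnit_iff_isUnit_det _).mpr hdet.isUnit
  have hr : (B.submatrix f id).rank = k := by
    rw [Matrix.rank_of_isUnit _ hu, Fintype.card_fin]
  have hk : k ≤ B.rank := by
    have heq : B.submatrix f id =
        ((1 : Matrix (Fin n) (Fin n) F).submatrix f ⇑(Equiv.refl (Fin n))) * B := by
      rw [Matrix.one_submatrix_mul]; simp
    calc k = (B.submatrix f id).rank := hr.symm
      _ ≤ B.rank := by rw [heq]; exact Matrix.rank_mul_le_right _ _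
  have := Matrix.rank_add_rank_le_card_of_mul_eq_zero hAB
  rw [Fintype.card_fin] at this
  omega

set_option maxHeartbeats 4000000 in
/-- Assume `q` is odd.  For `y ∈ F⁷`, the commutator matrix `R(y)` has rank `0`
iff `y₀ = ⋯ = y₅ = 0`; rank `2` iff `y₃ = y₄ = y₅ = 0` and at least one of `y₀, y₁, y₂` is
nonzero; and in all other cases rank `4`. -/
theorem stmt_14 (F : Type*) [Field F] [Fintype F] (q : ℕ) (hq : Fintype.card F = q)
    (hodd : Odd q) (y₀ y₁ y₂ y₃ y₄ y₅ y₆ : F) :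
    let R : Matrix (Fin 7) (Fin 7) F :=
      !![0, y₂, -2 * y₀, -2 * y₄, 0, y₃, 0;
         -y₂, 0, 2 * y₁, 2 * y₅, -y₃, 0, 0;
         2 * y₀, -2 * y₁, 0, 0, 2 * y₄, -2 * y₅, 0;
         2 * y₄, -2 * y₅, 0, 0, 0, 0, 0;
         0, y₃, -2 * y₄, 0, 0, 0, 0;
         -y₃, 0, 2 * y₅, 0, 0, 0, 0;
         0, 0, 0, 0, 0, 0, 0]
    (R.rank = 0 ↔ (y₀ = 0 ∧ y₁ = 0 ∧ y₂ = 0 ∧ y₃ = 0 ∧ y₄ = 0 ∧ y₅ = 0)) ∧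
    (R.rank = 2 ↔ ((y₃ = 0 ∧ y₄ = 0 ∧ y₅ = 0) ∧ (y₀ ≠ 0 ∨ y₁ ≠ 0 ∨ y₂ ≠ 0))) ∧
    ((¬ (y₀ = 0 ∧ y₁ = 0 ∧ y₂ = 0 ∧ y₃ = 0 ∧ y₄ = 0 ∧ y₅ = 0) ∧
      ¬ ((y₃ = 0 ∧ y₄ = 0 ∧ y₅ = 0) ∧ (y₀ ≠ 0 ∨ y₁ ≠ 0 ∨ y₂ ≠ 0))) → R.rank = 4) := by
  intro R
  have hRdef : R =
      !![0, y₂, -2 * y₀, -2 * y₄, 0, y₃, 0;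
         -y₂, 0, 2 * y₁, 2 * y₅, -y₃, 0, 0;
         2 * y₀, -2 * y₁, 0, 0, 2 * y₄, -2 * y₅, 0;
         2 * y₄, -2 * y₅, 0, 0, 0, 0, 0;
         0, y₃, -2 * y₄, 0, 0, 0, 0;
         -y₃, 0, 2 * y₅, 0, 0, 0, 0;
         0, 0, 0, 0, 0, 0, 0] := rfl
  have h2 : (2 : F) ≠ 0 := by
    refine Ring.two_ne_zero ?_
    intro hc
    have h := FiniteField.even_card_of_char_two hc
    rw [hq] at h
    rcases hodd with ⟨m, hm⟩
    omega
  -- rank 0 case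
  have key0 : (y₀ = 0 ∧ y₁ = 0 ∧ y₂ = 0 ∧ y₃ = 0 ∧ y₄ = 0 ∧ y₅ = 0) → R.rank = 0 := by
    rintro ⟨rfl, rfl, rfl, rfl, rfl, rfl⟩
    have hz : R = 0 := by
      rw [hRdef]; ext i j
      fin_cases i <;> fin_cases j <;>
        simp [show (5:Fin 7)=(4:Fin 6).succ from rfl, show (6:Fin 7)=(5:Fin 6).succ from rfl,
          show (5:Fin 6)=(4:Fin 5).succ from rfl, Matrix.cons_val_succ,
          Matrix.vecHead, Matrix.vecTail]
    rw [hz, Matrix.rank_zero]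
  -- rank 2 case
  have key2 : (y₃ = 0 ∧ y₄ = 0 ∧ y₅ = 0) → (y₀ ≠ 0 ∨ y₁ ≠ 0 ∨ y₂ ≠ 0) → R.rank = 2 := by
    rintro ⟨rfl, rfl, rfl⟩ h012
    set B : Matrix (Fin 7) (Fin 5) F :=
      !![2*y₁,0,0,0,0; 2*y₀,0,0,0,0; y₂,0,0,0,0; 0,1,0,0,0; 0,0,1,0,0; 0,0,0,1,0; 0,0,0,0,1]
      with hB
    have hR0 : R = !![0, y₂, -2*y₀, 0, 0, 0, 0;
                      -y₂, 0, 2*y₁, 0, 0, 0, 0;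
                      2*y₀, -2*y₁, 0, 0, 0, 0, 0;
                      0, 0, 0, 0, 0, 0, 0;
                      0, 0, 0, 0, 0, 0, 0;
                      0, 0, 0, 0, 0, 0, 0;
                      0, 0, 0, 0, 0, 0, 0] := by
      rw [hRdef]; ext i j
      fin_cases i <;> fin_cases j <;>
        simp [show (5:Fin 7)=(4:Fin 6).succ from rfl, show (6:Fin 7)=(5:Fin 6).succ from rfl,
          show (5:Fin 6)=(4:Fin 5).succ from rfl, Matrix.cons_val_succ,
          Matrix.vecHead, Matrix.vecTail]
    have hAB : R * B = 0 := by
      rw [hR0, hB]; ext i j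
      fin_cases i <;> fin_cases j <;>
        simp [Matrix.mul_apply, Fin.sum_univ_succ, Matrix.vecHead, Matrix.vecTail,
          show (5:Fin 7)=(4:Fin 6).succ from rfl, show (6:Fin 7)=(5:Fin 6).succ from rfl,
          show (5:Fin 6)=(4:Fin 5).succ from rfl, Matrix.cons_val_succ] <;> ring
    have hub5 : ∀ r : Fin 7, ∀ c : F, c ≠ 0 →
        (B.submatrix ![r,3,4,5,6] id) = !![c,0,0,0,0; 0,1,0,0,0; 0,0,1,0,0; 0,0,0,1,0; 0,0,0,0,1]
        → R.rank + 5 ≤ 7 := by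
      intro r c hc hsub
      refine stmt14_rank_le R B ![r,3,4,5,6] ?_ hAB
      rw [hsub]
      have hd : (!![c,0,0,0,0; 0,1,0,0,0; 0,0,1,0,0; 0,0,0,1,0; 0,0,0,0,1] :
          Matrix (Fin 5) (Fin 5) F).det = c := by
        simp [Matrix.det_succ_row_zero, Fin.sum_univ_succ, Fin.succAbove, Fin.castSucc,
          Fin.castAdd, Fin.castLE]
      rw [hd]; exact hc
    have hub : R.rank + 5 ≤ 7 := by
      rcases h012 with h | h | h
      · exact hub5 1 (2*y₀) (mul_ne_zero h2 h)
          (by rw [hB]; ext i j; fin_cases i <;> fin_cases j <;> rfl)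
      · exact hub5 0 (2*y₁) (mul_ne_zero h2 h)
          (by rw [hB]; ext i j; fin_cases i <;> fin_cases j <;> rfl)
      · exact hub5 2 y₂ h
          (by rw [hB]; ext i j; fin_cases i <;> fin_cases j <;> rfl)
    have hlb : 2 ≤ R.rank := by
      rcases h012 with h | h | h
      · refine stmt14_rank_ge R ![0,2] ![0,2] ?_
        have hs : (R.submatrix ![0,2] ![0,2]) = !![0, -2*y₀; 2*y₀, 0] := by
          rw [hR0]; ext i j; fin_cases i <;> fin_cases j <;> rfl
        have hd : (!![0, -2*y₀; 2*y₀, 0] : Matrix (Fin 2) (Fin 2) F).det = (2*y₀)*(2*y₀) := by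
          rw [Matrix.det_fin_two_of]; ring
        rw [hs, hd]
        exact mul_ne_zero (mul_ne_zero h2 h) (mul_ne_zero h2 h)
      · refine stmt14_rank_ge R ![1,2] ![1,2] ?_
        have hs : (R.submatrix ![1,2] ![1,2]) = !![0, 2*y₁; -2*y₁, 0] := by
          rw [hR0]; ext i j; fin_cases i <;> fin_cases j <;> rfl
        have hd : (!![0, 2*y₁; -2*y₁, 0] : Matrix (Fin 2) (Fin 2) F).det = (2*y₁)*(2*y₁) := by
          rw [Matrix.det_fin_two_of]; ring
        rw [hs, hd]
        exact mul_ne_zero (mul_ne_zero h2 h) (mul_ne_zero h2 h)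
      · refine stmt14_rank_ge R ![0,1] ![0,1] ?_
        have hs : (R.submatrix ![0,1] ![0,1]) = !![0, y₂; -y₂, 0] := by
          rw [hR0]; ext i j; fin_cases i <;> fin_cases j <;> rfl
        have hd : (!![0, y₂; -y₂, 0] : Matrix (Fin 2) (Fin 2) F).det = y₂*y₂ := by
          rw [Matrix.det_fin_two_of]; ring
        rw [hs, hd]
        exact mul_ne_zero h h
    omega
  -- rank 4 case
  have key4 : (y₃ ≠ 0 ∨ y₄ ≠ 0 ∨ y₅ ≠ 0) → R.rank = 4 := by
    intro h345
    set B : Matrix (Fin 7) (Fin 3) F :=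
      !![2*y₅, 0, 0; 2*y₄, 0, 0; y₃, 0, 0; y₂, y₃, 0; 2*y₁, 2*y₅, 0; 2*y₀, 2*y₄, 0; 0, 0, 1]
      with hB
    have hAB : R * B = 0 := by
      rw [hRdef, hB]; ext i j
      fin_cases i <;> fin_cases j <;>
        simp [Matrix.mul_apply, Fin.sum_univ_seven, Matrix.cons_val_zero, Matrix.cons_val_one,
          Matrix.head_cons, Matrix.cons_val_two, Matrix.cons_val_three, Matrix.cons_val_four,
          Matrix.cons_val_succ, show (5:Fin 7)=(4:Fin 6).succ from rfl,
          show (6:Fin 7)=(5:Fin 6).succ from rfl, show (5:Fin 6)=(4:Fin 5).succ from rfl,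
          Matrix.tail_cons] <;> ring
    have hub3 : ∀ r s : Fin 7, ∀ a b : F, a ≠ 0 →
        (B.submatrix ![r,s,6] id) = !![a,0,0; b,a,0; 0,0,1] → R.rank + 3 ≤ 7 := by
      intro r s a b ha hsub
      refine stmt14_rank_le R B ![r,s,6] ?_ hAB
      rw [hsub]
      have hd : (!![a,0,0; b,a,0; 0,0,1] : Matrix (Fin 3) (Fin 3) F).det = a*a := by
        rw [Matrix.det_fin_three]
        simp
        try ring
      rw [hd]
      exact mul_ne_zero ha ha
    have hub : R.rank + 3 ≤ 7 := by
      rcases h345 with h | h | h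
      · exact hub3 2 3 y₃ y₂ h
          (by rw [hB]; ext i j; fin_cases i <;> fin_cases j <;> rfl)
      · exact hub3 1 5 (2*y₄) (2*y₀) (mul_ne_zero h2 h)
          (by rw [hB]; ext i j; fin_cases i <;> fin_cases j <;> rfl)
      · exact hub3 0 4 (2*y₅) (2*y₁) (mul_ne_zero h2 h)
          (by rw [hB]; ext i j; fin_cases i <;> fin_cases j <;> rfl)
    have hlb : 4 ≤ R.rank := by
      rcases h345 with h | h | h
      · refine stmt14_rank_ge R ![0,1,4,5] ![0,1,4,5] ?_
        have hs : (R.submatrix ![0,1,4,5] ![0,1,4,5]) =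
            !![0,y₂,0,y₃; -y₂,0,-y₃,0; 0,y₃,0,0; -y₃,0,0,0] := by
          rw [hRdef]; ext i j; fin_cases i <;> fin_cases j <;> rfl
        have hd : (!![0,y₂,0,y₃; -y₂,0,-y₃,0; 0,y₃,0,0; -y₃,0,0,0] :
            Matrix (Fin 4) (Fin 4) F).det = y₃^4 := by
          simp [Matrix.det_succ_row_zero, Fin.sum_univ_succ, Fin.succAbove, Fin.castSucc,
            Fin.castAdd, Fin.castLE]
          ring
        rw [hs, hd]
        exact pow_ne_zero _ h
      · refine stmt14_rank_ge R ![0,2,3,4] ![0,2,3,4] ?_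
        have hs : (R.submatrix ![0,2,3,4] ![0,2,3,4]) =
            !![0,-2*y₀,-2*y₄,0; 2*y₀,0,0,2*y₄; 2*y₄,0,0,0; 0,-2*y₄,0,0] := by
          rw [hRdef]; ext i j; fin_cases i <;> fin_cases j <;> rfl
        have hd : (!![0,-2*y₀,-2*y₄,0; 2*y₀,0,0,2*y₄; 2*y₄,0,0,0; 0,-2*y₄,0,0] :
            Matrix (Fin 4) (Fin 4) F).det = (2*y₄)^4 := by
          simp [Matrix.det_succ_row_zero, Fin.sum_univ_succ, Fin.succAbove, Fin.castSucc,
            Fin.castAdd, Fin.castLE]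
          ring
        rw [hs, hd]
        exact pow_ne_zero _ (mul_ne_zero h2 h)
      · refine stmt14_rank_ge R ![1,2,3,5] ![1,2,3,5] ?_
        have hs : (R.submatrix ![1,2,3,5] ![1,2,3,5]) =
            !![0,2*y₁,2*y₅,0; -2*y₁,0,0,-2*y₅; -2*y₅,0,0,0; 0,2*y₅,0,0] := by
          rw [hRdef]; ext i j; fin_cases i <;> fin_cases j <;> rfl
        have hd : (!![0,2*y₁,2*y₅,0; -2*y₁,0,0,-2*y₅; -2*y₅,0,0,0; 0,2*y₅,0,0] :
            Matrix (Fin 4) (Fin 4) F).det = (2*y₅)^4 := by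
          simp [Matrix.det_succ_row_zero, Fin.sum_univ_succ, Fin.succAbove, Fin.castSucc,
            Fin.castAdd, Fin.castLE]
          ring
        rw [hs, hd]
        exact pow_ne_zero _ (mul_ne_zero h2 h)
    omega
  -- assemble
  by_cases h345 : y₃ = 0 ∧ y₄ = 0 ∧ y₅ = 0
  · by_cases h012 : y₀ = 0 ∧ y₁ = 0 ∧ y₂ = 0
    · have hr : R.rank = 0 :=
        key0 ⟨h012.1, h012.2.1, h012.2.2, h345.1, h345.2.1, h345.2.2⟩
      refine ⟨?_, ?_, ?_⟩
      · simp only [hr]; constructor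
        · intro _; exact ⟨h012.1, h012.2.1, h012.2.2, h345.1, h345.2.1, h345.2.2⟩
        · intro _; trivial
      · simp only [hr]; constructor
        · intro h; omega
        · rintro ⟨-, hc⟩; exact absurd h012 (by tauto)
      · rintro ⟨ha, -⟩
        exact absurd ⟨h012.1, h012.2.1, h012.2.2, h345.1, h345.2.1, h345.2.2⟩ ha
    · have hr : R.rank = 2 := key2 h345 (by tauto)
      refine ⟨?_, ?_, ?_⟩
      · simp only [hr]; constructor
        · intro h; omega
        · rintro ⟨h0, h1, h2', -⟩; exact absurd ⟨h0, h1, h2'⟩ h012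
      · simp only [hr]; exact iff_of_true trivial ⟨h345, by tauto⟩
      · rintro ⟨-, hb⟩; exact absurd ⟨h345, by tauto⟩ hb
  · have hr : R.rank = 4 := key4 (by tauto)
    refine ⟨?_, ?_, ?_⟩
    · simp only [hr]; constructor
      · intro h; omega
      · rintro ⟨-, -, -, h3, h4, h5⟩; exact absurd ⟨h3, h4, h5⟩ h345
    · simp only [hr]; constructor
      · intro h; omega
      · rintro ⟨hc, -⟩; exact absurd hc h345
    · intro _; exact hr
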